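/- The gradient of the Ising pseudolikelihood loss L(Θ;X) is Lipschitz continuous with Lipschitz constant at most N·P², i.e., for all symmetric Θ, Φ: ‖∇L(Θ;X) - ∇L(Φ;X)‖_F ≤ N·P²·‖Θ - Φ‖_F. -/

import Mathlib

open Matrix

attribute [local instance] Matrix.frobeniusNormedAddCommGroup Matrix.frobeniusNormedSpace

noncomputable def isingSig (t : ℝ) : ℝ := Real.exp t / (1 + Real.exp t)

lemma isingSig_mono {s t : ℝ} (h : s ≤ t) : isingSig s ≤ isingSig t := by
  have he := Real.exp_le_exp.2 h
  rw [isingSig, isingSig, div_le_div_iff₀ (by positivity) (by positivity)]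
  nlinarith [Real.exp_pos s, Real.exp_pos t]

lemma isingSig_sub_le {s t : ℝ} (h : s ≤ t) : isingSig t - isingSig s ≤ t - s := by
  have hs := Real.exp_pos s; have ht := Real.exp_pos t
  have h1 : isingSig t - isingSig s
      = (Real.exp t - Real.exp s) / ((1 + Real.exp t) * (1 + Real.exp s)) := by
    rw [isingSig, isingSig]; field_simp; ring
  rw [h1, div_le_iff₀ (by positivity)]
  have h2 : Real.exp s = Real.exp t * Real.exp (s - t) := by
    rw [← Real.exp_add]; ring_nf
  have h3 := Real.add_one_le_exp (s - t)
  have e1 : Real.exp t - Real.exp s ≤ Real.exp t * (t - s) := by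
    nlinarith [mul_le_mul_of_nonneg_left h3 ht.le]
  nlinarith [sub_nonneg.2 h, mul_nonneg (sub_nonneg.2 h) hs.le,
    mul_nonneg (sub_nonneg.2 h) ht.le,
    mul_nonneg (mul_nonneg (sub_nonneg.2 h) hs.le) ht.le]

lemma isingSig_lip (s t : ℝ) : |isingSig s - isingSig t| ≤ |s - t| := by
  rcases le_total s t with h | h
  · rw [abs_sub_comm, abs_sub_comm s t, abs_of_nonneg (sub_nonneg.2 (isingSig_mono h)),
      abs_of_nonneg (sub_nonneg.2 h)]
    exact isingSig_sub_le h
  · rw [abs_of_nonneg (sub_nonneg.2 (isingSig_mono h)), abs_of_nonneg (sub_nonneg.2 h)]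
    exact isingSig_sub_le h

lemma hasDerivAt_logexp (t : ℝ) :
    HasDerivAt (fun t => Real.log (1 + Real.exp t)) (isingSig t) t := by
  have h1 : HasDerivAt (fun t : ℝ => 1 + Real.exp t) (Real.exp t) t :=
    (Real.hasDerivAt_exp t).const_add 1
  have h2 := (Real.hasDerivAt_log (by positivity : (1:ℝ) + Real.exp t ≠ 0)).comp t h1
  have h3 : HasDerivAt (fun t => Real.log (1 + Real.exp t))
      ((1 + Real.exp t)⁻¹ * Real.exp t) t := h2
  rw [isingSig, div_eq_inv_mul]
  exact h3

/-- The linear functional `Θ ↦ Θ j j + ∑_{j'≠j} Θ j j' * X i j'`. -/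
noncomputable def isingA {N P : ℕ} (X : Matrix (Fin N) (Fin P) ℝ) (i : Fin N) (j : Fin P) :
    Matrix (Fin P) (Fin P) ℝ →ₗ[ℝ] ℝ where
  toFun Θ := Θ j j + ∑ j' ∈ Finset.univ.erase j, Θ j j' * X i j'
  map_add' A B := by
    simp only [Matrix.add_apply, add_mul, Finset.sum_add_distrib]; ring
  map_smul' c A := by
    simp only [Matrix.smul_apply, smul_eq_mul, mul_assoc, ← Finset.mul_sum, RingHom.id_apply]
    ring

/-- The linear functional `Θ ↦ ∑ j j', Θ j j' * S j j'`. -/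
noncomputable def isingB {P : ℕ} (S : Matrix (Fin P) (Fin P) ℝ) :
    Matrix (Fin P) (Fin P) ℝ →ₗ[ℝ] ℝ where
  toFun Θ := ∑ j, ∑ j', Θ j j' * S j j'
  map_add' A B := by
    simp only [Matrix.add_apply, add_mul, Finset.sum_add_distrib]
  map_smul' c A := by
    simp only [Matrix.smul_apply, smul_eq_mul, mul_assoc, ← Finset.mul_sum, RingHom.id_apply]

example (P : ℕ) (A : Matrix (Fin P) (Fin P) ℝ) (j j' : Fin P) :
    (Aᵀ * Matrix.single j j' 1).trace = A j j' := by
  simp [Matrix.trace, Matrix.diag, Matrix.mul_apply, Matrix.single,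
    Finset.sum_ite_eq, Matrix.transpose_apply, ite_and]

lemma trace_transpose_mul_stdBasis {P : ℕ} (A : Matrix (Fin P) (Fin P) ℝ) (j j' : Fin P) :
    (Aᵀ * Matrix.single j j' 1).trace = A j j' := by
  simp [Matrix.trace, Matrix.diag, Matrix.mul_apply, Matrix.single,
    Finset.sum_ite_eq, Matrix.transpose_apply, ite_and]

lemma isingA_stdBasis {N P : ℕ} (X : Matrix (Fin N) (Fin P) ℝ) (i : Fin N) (k j j' : Fin P) :
    isingA X i k (Matrix.single j j' 1) =
      if k = j then (if j' = j then 1 else X i j') else 0 := by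
  simp only [isingA, LinearMap.coe_mk, AddHom.coe_mk, Matrix.single, Matrix.of_apply]
  by_cases hk : k = j
  · subst hk
    by_cases hj : j' = k
    · subst hj
      simp [Finset.sum_ite_eq', Finset.mem_erase]
    · simp [hj, Ne.symm hj, Finset.sum_ite_eq', Finset.mem_erase, hj]
  · simp [Ne.symm hk, hk, fun l => (show ¬(j = k ∧ j' = l) from fun h => hk h.1.symm)]

lemma isingL_hasFDerivAt {N P : ℕ} (X : Matrix (Fin N) (Fin P) ℝ)
    (Θ : Matrix (Fin P) (Fin P) ℝ) :
    HasFDerivAt (fun Θ : Matrix (Fin P) (Fin P) ℝ =>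
      -(∑ j, ∑ j', Θ j j' * (Xᵀ * X) j j') +
        ∑ i, ∑ j, Real.log (1 + Real.exp
          (Θ j j + ∑ j' ∈ Finset.univ.erase j, Θ j j' * X i j')))
      (-(isingB (Xᵀ * X)).toContinuousLinearMap +
        ∑ i, ∑ j, isingSig (isingA X i j Θ) • (isingA X i j).toContinuousLinearMap) Θ := by
  have hB : HasFDerivAt (fun Θ : Matrix (Fin P) (Fin P) ℝ => ∑ j, ∑ j', Θ j j' * (Xᵀ * X) j j')
      (isingB (Xᵀ * X)).toContinuousLinearMap Θ :=
    (isingB (Xᵀ * X)).toContinuousLinearMap.hasFDerivAt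
  have hA : ∀ (i : Fin N) (j : Fin P), HasFDerivAt
      (fun Θ : Matrix (Fin P) (Fin P) ℝ => Real.log (1 + Real.exp
        (Θ j j + ∑ j' ∈ Finset.univ.erase j, Θ j j' * X i j')))
      (isingSig (isingA X i j Θ) • (isingA X i j).toContinuousLinearMap) Θ := by
    intro i j
    exact (hasDerivAt_logexp (isingA X i j Θ)).comp_hasFDerivAt Θ
      (isingA X i j).toContinuousLinearMap.hasFDerivAt
  exact hB.neg.add <| HasFDerivAt.fun_sum fun i _ => HasFDerivAt.fun_sum fun j _ => hA i j

lemma abs_entry_le_frobenius {P : ℕ} (M : Matrix (Fin P) (Fin P) ℝ) (a b : Fin P) :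
    |M a b| ≤ ‖M‖ := by
  rw [Matrix.frobenius_norm_def]
  have h1 : |M a b| = (|M a b| ^ (2:ℝ)) ^ (1/2 : ℝ) := by
    rw [← Real.rpow_mul (abs_nonneg _)]
    norm_num
  rw [h1]
  apply Real.rpow_le_rpow (by positivity) _ (by norm_num)
  have : |M a b| ^ (2:ℝ) = ‖M a b‖ ^ (2:ℝ) := by rw [Real.norm_eq_abs]
  rw [this]
  calc ‖M a b‖ ^ (2:ℝ) ≤ ∑ j, ‖M a j‖ ^ (2:ℝ) :=
        Finset.single_le_sum (f := fun j => ‖M a j‖ ^ (2:ℝ))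
          (fun j _ => by positivity) (Finset.mem_univ b)
    _ ≤ ∑ i, ∑ j, ‖M i j‖ ^ (2:ℝ) :=
        Finset.single_le_sum (f := fun i => ∑ j, ‖M i j‖ ^ (2:ℝ))
          (fun i _ => by positivity) (Finset.mem_univ a)

theorem ising_gradient_lipschitz
    (N P : ℕ) (X : Matrix (Fin N) (Fin P) ℝ) (hX : ∀ i j, X i j = 0 ∨ X i j = 1)
    (L : Matrix (Fin P) (Fin P) ℝ → ℝ)
    (hL : L = fun Θ : Matrix (Fin P) (Fin P) ℝ =>
      -(∑ j, ∑ j', Θ j j' * (Xᵀ * X) j j') +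
        ∑ i, ∑ j, Real.log (1 + Real.exp
          (Θ j j + ∑ j' ∈ Finset.univ.erase j, Θ j j' * X i j')))
    (gradL : Matrix (Fin P) (Fin P) ℝ → Matrix (Fin P) (Fin P) ℝ)
    (hgrad : ∀ Θ : Matrix (Fin P) (Fin P) ℝ,
      DifferentiableAt ℝ L Θ ∧
      ∀ H : Matrix (Fin P) (Fin P) ℝ, fderiv ℝ L Θ H = ((gradL Θ)ᵀ * H).trace) :
    ∀ Θ Φ : Matrix (Fin P) (Fin P) ℝ, Θ.IsSymm → Φ.IsSymm →
      ‖gradL Θ - gradL Φ‖ ≤ (N : ℝ) * (P : ℝ)^2 * ‖Θ - Φ‖ := by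
  intro Θ Φ hΘ hΦ
  have hfd : ∀ (Ψ H : Matrix (Fin P) (Fin P) ℝ), fderiv ℝ L Ψ H =
      -(isingB (Xᵀ * X) H) +
        ∑ i, ∑ k, isingSig (isingA X i k Ψ) * isingA X i k H := by
    intro Ψ H
    rw [hL, (isingL_hasFDerivAt X Ψ).fderiv]
    simp [ContinuousLinearMap.sum_apply, ContinuousLinearMap.smul_apply, smul_eq_mul]
  have hgradEntry : ∀ (Ψ : Matrix (Fin P) (Fin P) ℝ) (j j' : Fin P),
      gradL Ψ j j' = fderiv ℝ L Ψ (Matrix.single j j' 1) := by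
    intro Ψ j j'
    rw [(hgrad Ψ).2, trace_transpose_mul_stdBasis]
  have hD : ∀ j j' : Fin P, (gradL Θ - gradL Φ) j j' =
      ∑ i, (isingSig (isingA X i j Θ) - isingSig (isingA X i j Φ)) *
        isingA X i j (Matrix.single j j' 1) := by
    intro j j'
    rw [Matrix.sub_apply, hgradEntry, hgradEntry, hfd, hfd]
    have hring : ∀ b s1 s2 : ℝ, (-b + s1) - (-b + s2) = s1 - s2 := fun _ _ _ => by ring
    rw [hring, ← Finset.sum_sub_distrib]
    refine Finset.sum_congr rfl fun i _ => ?_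
    rw [← Finset.sum_sub_distrib]
    simp_rw [← sub_mul]
    refine Finset.sum_eq_single (M := ℝ) j (fun k _ hk => ?_) ?_
    · rw [isingA_stdBasis]
      simp [hk]
    · exact fun h => (h (Finset.mem_univ j)).elim
  set Ψ := Θ - Φ with hΨ
  have hAbound : ∀ (i : Fin N) (j : Fin P), |isingA X i j Ψ| ≤ (P : ℝ) * ‖Ψ‖ := by
    intro i j
    have h1 : isingA X i j Ψ = Ψ j j + ∑ l ∈ Finset.univ.erase j, Ψ j l * X i l := rfl
    rw [h1]
    calc |Ψ j j + ∑ l ∈ Finset.univ.erase j, Ψ j l * X i l|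
        ≤ |Ψ j j| + |∑ l ∈ Finset.univ.erase j, Ψ j l * X i l| := abs_add_le _ _
      _ ≤ |Ψ j j| + ∑ l ∈ Finset.univ.erase j, |Ψ j l * X i l| :=
          add_le_add_right (Finset.abs_sum_le_sum_abs _ _) _
      _ ≤ |Ψ j j| + ∑ l ∈ Finset.univ.erase j, |Ψ j l| := by
          refine add_le_add_right (Finset.sum_le_sum fun l _ => ?_) _
          rw [abs_mul]
          rcases hX i l with h | h <;> simp [h]
      _ = ∑ l, |Ψ j l| :=
          Finset.add_sum_erase _ (fun l => |Ψ j l|) (Finset.mem_univ j)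
      _ ≤ ∑ _l : Fin P, ‖Ψ‖ := Finset.sum_le_sum fun l _ => abs_entry_le_frobenius Ψ j l
      _ = (P : ℝ) * ‖Ψ‖ := by simp [mul_comm]
  have habs : ∀ j j' : Fin P, |(gradL Θ - gradL Φ) j j'| ≤ (N : ℝ) * ((P : ℝ) * ‖Ψ‖) := by
    intro j j'
    rw [hD]
    calc |∑ i, (isingSig (isingA X i j Θ) - isingSig (isingA X i j Φ)) *
            isingA X i j (Matrix.single j j' 1)|
        ≤ ∑ i, |(isingSig (isingA X i j Θ) - isingSig (isingA X i j Φ)) *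
            isingA X i j (Matrix.single j j' 1)| := Finset.abs_sum_le_sum_abs _ _
      _ ≤ ∑ _i : Fin N, (P : ℝ) * ‖Ψ‖ := by
          refine Finset.sum_le_sum fun i _ => ?_
          rw [abs_mul]
          have hc : |isingA X i j (Matrix.single j j' 1)| ≤ 1 := by
            rw [isingA_stdBasis]
            simp only [if_pos rfl]
            by_cases hj : j' = j
            · simp [hj]
            · rcases hX i j' with h | h <;> simp [hj, h]
          have hd : |isingSig (isingA X i j Θ) - isingSig (isingA X i j Φ)| ≤ (P : ℝ) * ‖Ψ‖ := by
            refine (isingSig_lip _ _).trans ?_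
            rw [← LinearMap.map_sub]
            exact hAbound i j
          calc |isingSig (isingA X i j Θ) - isingSig (isingA X i j Φ)| *
                |isingA X i j (Matrix.single j j' 1)|
              ≤ ((P : ℝ) * ‖Ψ‖) * 1 := by
                apply mul_le_mul hd hc (abs_nonneg _) (by positivity)
            _ = (P : ℝ) * ‖Ψ‖ := mul_one _
      _ = (N : ℝ) * ((P : ℝ) * ‖Ψ‖) := by simp [mul_comm]
  have hC : (0:ℝ) ≤ (N : ℝ) * ((P : ℝ) * ‖Ψ‖) := by positivity
  rw [Matrix.frobenius_norm_def]
  have hbound : ∑ j, ∑ j', ‖(gradL Θ - gradL Φ) j j'‖ ^ (2:ℝ)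
      ≤ ((P : ℝ) * ((N : ℝ) * ((P : ℝ) * ‖Ψ‖))) ^ (2:ℝ) := by
    calc ∑ j, ∑ j', ‖(gradL Θ - gradL Φ) j j'‖ ^ (2:ℝ)
        ≤ ∑ _j : Fin P, ∑ _j' : Fin P, ((N : ℝ) * ((P : ℝ) * ‖Ψ‖)) ^ (2:ℝ) := by
          refine Finset.sum_le_sum fun j _ => Finset.sum_le_sum fun j' _ => ?_
          apply Real.rpow_le_rpow (norm_nonneg _) _ (by norm_num)
          rw [Real.norm_eq_abs]
          exact habs j j'
      _ = (P:ℝ)^2 * ((N : ℝ) * ((P : ℝ) * ‖Ψ‖)) ^ (2:ℝ) := by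
          simp [Finset.sum_const, Finset.card_univ]; ring
      _ = ((P : ℝ) * ((N : ℝ) * ((P : ℝ) * ‖Ψ‖))) ^ (2:ℝ) := by
          have hp : ((P:ℝ)) ^ (2:ℝ) = (P:ℝ) ^ (2:ℕ) := by
            rw [← Real.rpow_natCast (P:ℝ) 2]; norm_num
          rw [Real.mul_rpow (by positivity) hC, hp]
  calc (∑ j, ∑ j', ‖(gradL Θ - gradL Φ) j j'‖ ^ (2:ℝ)) ^ (1/2 : ℝ)
      ≤ (((P : ℝ) * ((N : ℝ) * ((P : ℝ) * ‖Ψ‖))) ^ (2:ℝ)) ^ (1/2:ℝ) := by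
        apply Real.rpow_le_rpow (by positivity) hbound (by norm_num)
    _ = (P : ℝ) * ((N : ℝ) * ((P : ℝ) * ‖Ψ‖)) := by
        rw [← Real.rpow_mul (by positivity)]
        norm_num
    _ = (N : ℝ) * (P : ℝ)^2 * ‖Θ - Φ‖ := by rw [hΨ]; ring
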